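/- For every prime power q, every finite field F with |F| = q, and all reals ε, δ > 0 with ε + δ < 1/2, for all sufficiently large n there exists an n×n matrix M over F such that for every n×n matrix S over F with at most ⌊δ·n²/log₂ n⌋ nonzero entries, the rank of M + S is strictly greater than ε·n. -/

import Mathlib

/-- The number of nonzero entries of a matrix. -/
def nonzeroEntries {n : ℕ} {F : Type*} [Zero F] [DecidableEq F]
    (S : Matrix (Fin n) (Fin n) F) : ℕ :=
  (Finset.univ.filter (fun p : Fin n × Fin n => S p.1 p.2 ≠ 0)).card

open Matrix

lemma rank_factor {F : Type} [Field F] {n r : ℕ} (A : Matrix (Fin n) (Fin n) F)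
    (h : A.rank ≤ r) :
    ∃ (B : Matrix (Fin n) (Fin r) F) (C : Matrix (Fin r) (Fin n) F), A = B * C := by
  classical
  set V := LinearMap.range A.mulVecLin with hV
  have hd : Module.finrank F V ≤ r := h
  set d := Module.finrank F V with hdd
  let b : Module.Basis (Fin d) F V := Module.finBasis F V
  let e : V ≃ₗ[F] (Fin d → F) := b.equivFun
  let ι : (Fin d → F) →ₗ[F] (Fin r → F) :=
    LinearMap.pi (fun i => if hi : (i : ℕ) < d then LinearMap.proj ⟨i, hi⟩ else 0)
  let π : (Fin r → F) →ₗ[F] (Fin d → F) := LinearMap.funLeft F F (Fin.castLE hd)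
  have hπι : ∀ x, π (ι x) = x := by
    intro x
    ext k
    simp only [π, ι, LinearMap.funLeft_apply, LinearMap.pi_apply]
    rw [dif_pos (show ((Fin.castLE hd k : Fin r) : ℕ) < d from k.isLt)]
    rfl
  let f₁ : (Fin n → F) →ₗ[F] (Fin r → F) :=
    ι ∘ₗ e.toLinearMap ∘ₗ A.mulVecLin.rangeRestrict
  let f₂ : (Fin r → F) →ₗ[F] (Fin n → F) := V.subtype ∘ₗ e.symm.toLinearMap ∘ₗ π
  have hcomp : f₂ ∘ₗ f₁ = A.mulVecLin := by
    apply LinearMap.ext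
    intro v
    simp only [f₁, f₂, LinearMap.comp_apply, hπι, LinearEquiv.coe_coe,
      LinearEquiv.symm_apply_apply, Submodule.coe_subtype, LinearMap.rangeRestrict,
      LinearMap.codRestrict_apply]
  refine ⟨LinearMap.toMatrix' f₂, LinearMap.toMatrix' f₁, ?_⟩
  rw [← LinearMap.toMatrix'_comp, hcomp]
  rw [show A.mulVecLin = Matrix.toLin' A from rfl, LinearMap.toMatrix'_toLin']

lemma card_matrix_eq (F : Type) [Fintype F] [DecidableEq F] (a b : ℕ) :
    Fintype.card (Matrix (Fin a) (Fin b) F) = Fintype.card F ^ (a * b) := by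
  rw [show Fintype.card (Matrix (Fin a) (Fin b) F)
      = Fintype.card (Fin a → Fin b → F) from Fintype.card_congr (Matrix.of.symm)]
  rw [Fintype.card_fun, Fintype.card_fun, Fintype.card_fin, Fintype.card_fin,
    ← pow_mul, Nat.mul_comm]

lemma nonzeroEntries_neg {n : ℕ} {F : Type*} [DecidableEq F] [SubtractionMonoid F]
    (S : Matrix (Fin n) (Fin n) F) : nonzeroEntries (-S) = nonzeroEntries S := by
  unfold nonzeroEntries
  congr 1
  apply Finset.filter_congr
  intro p _
  simp [Matrix.neg_apply]

lemma sparse_card_le (F : Type) [Fintype F] [DecidableEq F] [Zero F] (n s : ℕ)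
    (hn : 1 ≤ n) :
    (Finset.univ.filter fun S : Matrix (Fin n) (Fin n) F => nonzeroEntries S ≤ s).card
      ≤ (s + 1) * (n ^ 2) ^ s * Fintype.card F ^ s := by
  classical
  set q := Fintype.card F with hq
  set P : Finset (Finset (Fin n × Fin n)) :=
    (Finset.range (s + 1)).biUnion
      (fun k => Finset.powersetCard k (Finset.univ : Finset (Fin n × Fin n))) with hP
  have hsub : (Finset.univ.filter fun S : Matrix (Fin n) (Fin n) F => nonzeroEntries S ≤ s)
      ⊆ P.biUnion fun T => Finset.univ.filter
        (fun S : Matrix (Fin n) (Fin n) F => ∀ p : Fin n × Fin n, p ∉ T → S p.1 p.2 = 0) := by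
    intro S hS
    rw [Finset.mem_filter] at hS
    refine Finset.mem_biUnion.2
      ⟨Finset.univ.filter (fun p : Fin n × Fin n => S p.1 p.2 ≠ 0), ?_, ?_⟩
    · exact Finset.mem_biUnion.2 ⟨nonzeroEntries S,
        Finset.mem_range.2 (Nat.lt_succ_of_le hS.2),
        Finset.mem_powersetCard.2 ⟨Finset.subset_univ _, rfl⟩⟩
    · refine Finset.mem_filter.2 ⟨Finset.mem_univ _, fun p hp => ?_⟩
      by_contra h
      exact hp (Finset.mem_filter.2 ⟨Finset.mem_univ _, h⟩)
  have hTcard : ∀ T ∈ P, T.card ≤ s := by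
    intro T hT
    obtain ⟨k, hk, hTk⟩ := Finset.mem_biUnion.1 hT
    rw [Finset.mem_powersetCard] at hTk
    rw [hTk.2]
    exact Nat.lt_succ_iff.1 (Finset.mem_range.1 hk)
  have hTsupp : ∀ T : Finset (Fin n × Fin n),
      (Finset.univ.filter
        (fun S : Matrix (Fin n) (Fin n) F => ∀ p : Fin n × Fin n, p ∉ T → S p.1 p.2 = 0)).card
        ≤ q ^ T.card := by
    intro T
    have : (Finset.univ.filter
        (fun S : Matrix (Fin n) (Fin n) F => ∀ p : Fin n × Fin n, p ∉ T → S p.1 p.2 = 0)).card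
        ≤ (Finset.univ : Finset ({ x // x ∈ T } → F)).card := by
      apply Finset.card_le_card_of_injOn (fun S (p : { x // x ∈ T }) => S p.1.1 p.1.2)
        (fun _ _ => Finset.mem_univ _)
      intro S hS S' hS' h
      rw [Finset.mem_coe, Finset.mem_filter] at hS hS'
      ext i j
      by_cases hij : (i, j) ∈ T
      · exact congrFun h ⟨(i, j), hij⟩
      · rw [hS.2 (i, j) hij, hS'.2 (i, j) hij]
    calc _ ≤ (Finset.univ : Finset ({ x // x ∈ T } → F)).card := this
      _ = q ^ T.card := by
          rw [Finset.card_univ, Fintype.card_fun, Fintype.card_coe]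
  have hPcard : P.card ≤ (s + 1) * (n ^ 2) ^ s := by
    calc P.card ≤ ∑ k ∈ Finset.range (s + 1),
        (Finset.powersetCard k (Finset.univ : Finset (Fin n × Fin n))).card :=
          Finset.card_biUnion_le
      _ ≤ ∑ _k ∈ Finset.range (s + 1), (n ^ 2) ^ s := by
          apply Finset.sum_le_sum
          intro k hk
          rw [Finset.card_powersetCard, Finset.card_univ, Fintype.card_prod,
            Fintype.card_fin]
          calc (n * n).choose k ≤ (n * n) ^ k := Nat.choose_le_pow _ _
            _ ≤ (n * n) ^ s := Nat.pow_le_pow_right (Nat.le_trans hn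
                (Nat.le_mul_of_pos_left n hn))
                (Nat.lt_succ_iff.1 (Finset.mem_range.1 hk))
            _ = (n ^ 2) ^ s := by ring_nf
      _ = (s + 1) * (n ^ 2) ^ s := by
          rw [Finset.sum_const, Finset.card_range, smul_eq_mul]
  calc (Finset.univ.filter fun S : Matrix (Fin n) (Fin n) F => nonzeroEntries S ≤ s).card
      ≤ (P.biUnion fun T => Finset.univ.filter
          (fun S : Matrix (Fin n) (Fin n) F =>
            ∀ p : Fin n × Fin n, p ∉ T → S p.1 p.2 = 0)).card :=
        Finset.card_le_card hsub
    _ ≤ ∑ T ∈ P, (Finset.univ.filter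
          (fun S : Matrix (Fin n) (Fin n) F =>
            ∀ p : Fin n × Fin n, p ∉ T → S p.1 p.2 = 0)).card := Finset.card_biUnion_le
    _ ≤ ∑ T ∈ P, q ^ s := by
        apply Finset.sum_le_sum
        intro T hT
        exact (hTsupp T).trans (Nat.pow_le_pow_right (Fintype.card_pos) (hTcard T hT))
    _ = P.card * q ^ s := by rw [Finset.sum_const, smul_eq_mul]
    _ ≤ (s + 1) * (n ^ 2) ^ s * q ^ s := Nat.mul_le_mul_right _ hPcard

set_option maxHeartbeats 1000000 in
/-- For every prime power `q`, every finite field `F` with `|F| = q`, and all reals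
`ε, δ > 0` with `ε + δ < 1/2`, for all sufficiently large `n` there exists an `n × n`
matrix `M` over `F` that is `(εn, ⌊δn²/log₂ n⌋)`-rigid: for every `n × n` matrix `S`
over `F` with at most `⌊δ·n²/log₂ n⌋` nonzero entries, `rank (M + S) > εn`. -/
theorem exists_rigid_matrix (q : ℕ) (hq : IsPrimePow q)
    (F : Type) [Field F] [Fintype F] [DecidableEq F] (hF : Fintype.card F = q)
    (ε δ : ℝ) (hε : 0 < ε) (hδ : 0 < δ) (hεδ : ε + δ < 1 / 2) :
    ∃ n₀ : ℕ, ∀ n ≥ n₀, ∃ M : Matrix (Fin n) (Fin n) F,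
      ∀ S : Matrix (Fin n) (Fin n) F,
        nonzeroEntries S ≤ ⌊δ * (n : ℝ) ^ 2 / Real.logb 2 n⌋₊ →
        ε * n < ((M + S).rank : ℝ) := by
  classical
  have hq2 : 2 ≤ q := hq.two_le
  have hcF : 2 ≤ Fintype.card F := hF ▸ hq2
  set c : ℝ := 1 / 2 - (ε + δ) with hc
  have hc0 : 0 < c := by simp only [hc]; linarith
  refine ⟨max (max 2 (⌈(2 : ℝ) ^ ((6 * δ) / c)⌉₊ + 1)) (⌈10 / c⌉₊ + 1), ?_⟩
  intro n hn
  have hn2 : 2 ≤ n := le_trans (le_trans (le_max_left _ _) (le_max_left _ _)) hn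
  have hnceil : ⌈(2 : ℝ) ^ ((6 * δ) / c)⌉₊ + 1 ≤ n :=
    le_trans (le_trans (le_max_right _ _) (le_max_left _ _)) hn
  have hnc : ⌈10 / c⌉₊ + 1 ≤ n := le_trans (le_max_right _ _) hn
  have hn0 : 0 < n := by omega
  have hn2R : (2 : ℝ) ≤ n := by exact_mod_cast hn2
  have hnR0 : (0 : ℝ) < n := by linarith
  set lg : ℝ := Real.logb 2 n with hlg
  have hlg1 : 1 ≤ lg := by
    rw [hlg, Real.le_logb_iff_rpow_le one_lt_two hnR0, Real.rpow_one]
    exact hn2R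
  have hlg0 : 0 < lg := lt_of_lt_of_le one_pos hlg1
  have hlglb : 6 * δ / c ≤ lg := by
    rw [hlg, Real.le_logb_iff_rpow_le one_lt_two hnR0]
    calc (2 : ℝ) ^ ((6 * δ) / c) ≤ (⌈(2 : ℝ) ^ ((6 * δ) / c)⌉₊ : ℝ) := Nat.le_ceil _
      _ ≤ n := by exact_mod_cast Nat.le_of_succ_le hnceil
  have hlgub : lg ≤ n := by
    rw [hlg, Real.logb_le_iff_le_rpow one_lt_two hnR0, Real.rpow_natCast]
    exact_mod_cast (Nat.lt_two_pow_self (n := n)).le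
  have hcn : 10 ≤ c * n := by
    have h1 : 10 / c ≤ (⌈10 / c⌉₊ : ℝ) := Nat.le_ceil _
    have h2 : ((⌈10 / c⌉₊ : ℕ) : ℝ) ≤ n := by exact_mod_cast Nat.le_of_succ_le hnc
    rw [div_le_iff₀ hc0] at h1
    calc (10 : ℝ) ≤ (⌈10 / c⌉₊ : ℝ) * c := h1
      _ ≤ n * c := mul_le_mul_of_nonneg_right h2 hc0.le
      _ = c * n := mul_comm _ _
  set r := ⌊ε * n⌋₊ with hr
  set s := ⌊δ * (n : ℝ) ^ 2 / lg⌋₊ with hs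
  have hrR : (r : ℝ) ≤ ε * n := Nat.floor_le (by positivity)
  have hsR : (s : ℝ) ≤ δ * (n : ℝ) ^ 2 / lg := Nat.floor_le (by positivity)
  set L := 2 * Nat.log 2 n + 2 with hL
  have hlogR : (Nat.log 2 n : ℝ) ≤ lg := by
    rw [hlg, Real.le_logb_iff_rpow_le one_lt_two hnR0, Real.rpow_natCast]
    exact_mod_cast Nat.pow_log_le_self 2 hn0.ne'
  have hLR : (L : ℝ) ≤ 2 * lg + 2 := by
    rw [hL]; push_cast; linarith
  -- n² ≤ (card F) ^ L
  have hn2L : n ^ 2 ≤ Fintype.card F ^ L := by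
    have h1 : n < 2 ^ (Nat.log 2 n + 1) := Nat.lt_pow_succ_log_self one_lt_two n
    have h2 : n ^ 2 ≤ 2 ^ L := by
      calc n ^ 2 ≤ (2 ^ (Nat.log 2 n + 1)) ^ 2 := Nat.pow_le_pow_left h1.le 2
        _ = 2 ^ L := by rw [hL, ← pow_mul]; ring_nf
    exact h2.trans (Nat.pow_le_pow_left hcF L)
  -- s + 1 ≤ n²
  have hsn : s + 1 ≤ n ^ 2 := by
    have hδhalf : δ ≤ 1 / 2 := by linarith
    have h1 : (s : ℝ) ≤ (n : ℝ) ^ 2 / 2 := by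
      calc (s : ℝ) ≤ δ * (n : ℝ) ^ 2 / lg := hsR
        _ ≤ δ * (n : ℝ) ^ 2 := by
            rw [div_le_iff₀ hlg0]
            nlinarith [mul_le_mul_of_nonneg_left hlg1
              (show (0:ℝ) ≤ δ * (n : ℝ) ^ 2 by positivity)]
        _ ≤ (n : ℝ) ^ 2 / 2 := by nlinarith
    have h2 : ((s + 1 : ℕ) : ℝ) ≤ ((n ^ 2 : ℕ) : ℝ) := by
      push_cast
      nlinarith
    exact_mod_cast h2
  -- the set of bad matrices
  set sparse : Finset (Matrix (Fin n) (Fin n) F) :=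
    Finset.univ.filter (fun S => nonzeroEntries S ≤ s) with hsparse
  set bad : Finset (Matrix (Fin n) (Fin n) F) :=
    ((Finset.univ : Finset (Matrix (Fin n) (Fin r) F × Matrix (Fin r) (Fin n) F)) ×ˢ
      sparse).image (fun t => t.1.1 * t.1.2 + t.2) with hbad
  set E := n * r + r * n + (L + (L * s + s)) with hE
  have hbadcard : bad.card ≤ Fintype.card F ^ E := by
    calc bad.card ≤ ((Finset.univ :
          Finset (Matrix (Fin n) (Fin r) F × Matrix (Fin r) (Fin n) F)) ×ˢ sparse).card :=
        Finset.card_image_le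
      _ = Fintype.card (Matrix (Fin n) (Fin r) F × Matrix (Fin r) (Fin n) F) * sparse.card := by
          rw [Finset.card_product, Finset.card_univ]
      _ ≤ Fintype.card F ^ (n * r + r * n) *
            ((s + 1) * (n ^ 2) ^ s * Fintype.card F ^ s) := by
          apply Nat.mul_le_mul
          · rw [Fintype.card_prod, card_matrix_eq, card_matrix_eq, ← pow_add]
          · exact sparse_card_le F n s (by omega)
      _ ≤ Fintype.card F ^ (n * r + r * n) *
            (Fintype.card F ^ L * (Fintype.card F ^ L) ^ s * Fintype.card F ^ s) := by
          exact Nat.mul_le_mul le_rfl (Nat.mul_le_mul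
            (Nat.mul_le_mul (Nat.le_trans hsn hn2L) (Nat.pow_le_pow_left hn2L s)) le_rfl)
      _ = Fintype.card F ^ E := by
          simp only [← pow_mul, ← pow_add]
          congr 1
          rw [hE]
          ring
  -- E < n²
  have hEn : E < n ^ 2 := by
    clear_value c lg r s L E
    have hErR : (E : ℝ) = (n : ℝ) * r + r * n + (L + (L * s + s)) := by
      rw [hE]; push_cast; ring
    have h2nr : (n : ℝ) * r + r * n ≤ 2 * ε * (n : ℝ) ^ 2 := by nlinarith
    have hLs : (L : ℝ) * s ≤ (2 * lg + 2) * (δ * (n : ℝ) ^ 2 / lg) := by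
      apply mul_le_mul hLR hsR (by positivity)
      positivity
    have hLs2 : (2 * lg + 2) * (δ * (n : ℝ) ^ 2 / lg)
        = 2 * δ * (n : ℝ) ^ 2 + 2 * (δ * (n : ℝ) ^ 2 / lg) := by
      field_simp
    have hsmall : δ * (n : ℝ) ^ 2 / lg ≤ c * (n : ℝ) ^ 2 / 6 := by
      rw [div_le_div_iff₀ hlg0 (by norm_num)]
      have h6 : 6 * δ ≤ lg * c := (div_le_iff₀ hc0).1 hlglb
      nlinarith [mul_le_mul_of_nonneg_right h6 (sq_nonneg (n : ℝ))]
    have hlgsmall : 2 * lg + 2 < c * (n : ℝ) ^ 2 / 2 := by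
      have hsq : c * (n : ℝ) ^ 2 = (c * n) * n := by ring
      have h10n : 10 * (n : ℝ) ≤ (c * n) * n := mul_le_mul_of_nonneg_right hcn hnR0.le
      rw [hsq]
      nlinarith [hlgub, hn2R, h10n]
    have : (E : ℝ) < (n : ℝ) ^ 2 := by
      rw [hErR]
      have hc2 : 2 * (ε + δ) = 1 - 2 * c := by rw [hc]; ring
      nlinarith
    have h2 : (E : ℝ) < ((n ^ 2 : ℕ) : ℝ) := by push_cast; linarith [this]
    exact_mod_cast h2
  have hcard : bad.card < Fintype.card (Matrix (Fin n) (Fin n) F) := by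
    rw [card_matrix_eq, ← pow_two]
    exact lt_of_le_of_lt hbadcard (Nat.pow_lt_pow_right (by omega) hEn)
  obtain ⟨M, hM⟩ : ∃ M : Matrix (Fin n) (Fin n) F, M ∉ bad := by
    by_contra h
    push_neg at h
    have : (Finset.univ : Finset (Matrix (Fin n) (Fin n) F)).card ≤ bad.card :=
      Finset.card_le_card (fun x _ => h x)
    rw [Finset.card_univ] at this
    omega
  refine ⟨M, ?_⟩
  intro S hS
  by_contra hrank
  push_neg at hrank
  have hrle : (M + S).rank ≤ r := Nat.le_floor hrank
  obtain ⟨B, C, hBC⟩ := rank_factor (M + S) hrle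
  have hMeq : M = B * C + (-S) := by
    rw [← hBC]
    abel
  apply hM
  rw [hbad]
  apply Finset.mem_image.2
  refine ⟨⟨(B, C), -S⟩, ?_, hMeq.symm⟩
  apply Finset.mem_product.2
  refine ⟨Finset.mem_univ _, ?_⟩
  rw [hsparse]
  apply Finset.mem_filter.2
  exact ⟨Finset.mem_univ _, by rw [nonzeroEntries_neg]; exact hS⟩
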